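/- Fix 2 ≤ k ≤ r. There exist a constant c > 0 and n₀ such that for all n ≥ n₀, |β(n,r,k) − α^(r−k+1)·C(n,k−1)| ≤ c·n^(k−2), where C(·,·) denotes the binomial coefficient; that is, β(n,r,k) = α^(r−k+1)·C(n,k−1) + O(n^(k−2)). -/

import Mathlib

open Finset

/-- The ground set `[n] = {1, …, n}`. -/
def grd (n : ℕ) : Finset ℕ := Finset.Icc 1 n

/-- `[n]^(k)`: all `k`-element subsets of `[n]`. -/
def ksets (n k : ℕ) : Finset (Finset ℕ) := (grd n).powersetCard k

/-- A family of sets is intersecting if any two of its members meet. -/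
def IsIntersecting (𝒜 : Finset (Finset ℕ)) : Prop :=
  ∀ A ∈ 𝒜, ∀ B ∈ 𝒜, (A ∩ B).Nonempty

/-- `𝒜⟨k⟩`: the collection of `k`-sets arising as pairwise intersections of members of `𝒜`. -/
def interk (𝒜 : Finset (Finset ℕ)) (k : ℕ) : Finset (Finset ℕ) :=
  ((𝒜 ×ˢ 𝒜).image fun p => p.1 ∩ p.2).filter fun C => C.card = k

/-- `𝒜⟨1⟩` identified with a set of points: all `x` with `{x} = A ∩ B` for some `A, B ∈ 𝒜`. -/
def interPts (𝒜 : Finset (Finset ℕ)) : Finset ℕ :=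
  (interk 𝒜 1).sup id

/-- `β(n,r,k)`: the maximum of `|𝒜⟨k⟩|` over intersecting families `𝒜 ⊆ [n]^(r)`. -/
noncomputable def beta (n r k : ℕ) : ℕ :=
  sSup {m | ∃ 𝒜 ⊆ ksets n r, IsIntersecting 𝒜 ∧ (interk 𝒜 k).card = m}

/-- `α^(r) = max {β(n,r,1) : n ≥ r}` (finite by Lovász's theorem). -/
noncomputable def alpha (r : ℕ) : ℕ :=
  sSup {m | ∃ n, r ≤ n ∧ beta n r 1 = m}


-- Auxiliary development --

theorem sunflower_lemma (p : ℕ) : ∀ (r : ℕ) (S : Finset (Finset ℕ)),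
    (∀ A ∈ S, A.card = r) → r.factorial * (p+1)^r < S.card →
    ∃ T ⊆ S, T.card = p + 2 ∧ ∃ Y, ∀ A ∈ T, ∀ B ∈ T, A ≠ B → A ∩ B = Y := by
  intro r
  induction r with
  | zero =>
    intro S hcard h
    exfalso
    have hsub : S ⊆ {∅} := fun A hA => by
      simp [Finset.card_eq_zero.mp (hcard A hA)]
    have := Finset.card_le_card hsub
    simp only [Finset.card_singleton] at this
    simp at h; omega
  | succ r ih =>
    intro S hcard h
    classical
    obtain ⟨M, hMmem, hMmax⟩ := Finset.exists_max_image
      ((S.powerset).filter fun M => ∀ A ∈ M, ∀ B ∈ M, A ≠ B → A ∩ B = ∅)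
      Finset.card ⟨∅, by simp⟩
    rw [Finset.mem_filter, Finset.mem_powerset] at hMmem
    obtain ⟨hMS, hMdisj⟩ := hMmem
    by_cases hbig : p + 2 ≤ M.card
    · obtain ⟨T, hTM, hT⟩ := Finset.exists_subset_card_eq hbig
      exact ⟨T, hTM.trans hMS, hT, ∅, fun A hA B hB hAB =>
        hMdisj A (hTM hA) B (hTM hB) hAB⟩
    · push_neg at hbig
      have hMcard : M.card ≤ p + 1 := by omega
      set V := M.biUnion id with hV
      have hVcard : V.card ≤ (p+1) * (r+1) := by
        calc V.card ≤ ∑ A ∈ M, A.card := Finset.card_biUnion_le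
        _ ≤ M.card * (r+1) := by
            rw [← smul_eq_mul]
            exact Finset.sum_le_card_nsmul _ _ _ fun A hA => le_of_eq (hcard A (hMS hA))
        _ ≤ (p+1) * (r+1) := Nat.mul_le_mul_right _ hMcard
      have hmeet : ∀ A ∈ S, ∃ x ∈ A, x ∈ V := by
        intro A hA
        by_contra hc
        push_neg at hc
        have hAnotM : A ∉ M := by
          intro hAM
          have hAne : A.Nonempty := Finset.card_pos.mp (by rw [hcard A hA]; omega)
          obtain ⟨a, ha⟩ := hAne
          exact hc a ha (Finset.mem_biUnion.mpr ⟨A, hAM, ha⟩)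
        have hins : insert A M ∈ (S.powerset).filter
            fun M => ∀ A ∈ M, ∀ B ∈ M, A ≠ B → A ∩ B = ∅ := by
          rw [Finset.mem_filter, Finset.mem_powerset]
          constructor
          · intro B hB
            rcases Finset.mem_insert.mp hB with rfl | hB
            · exact hA
            · exact hMS hB
          · intro B hB C hC hBC
            have key : ∀ D ∈ M, A ∩ D = ∅ := by
              intro D hD
              rw [Finset.eq_empty_iff_forall_notMem]
              intro y hy
              rw [Finset.mem_inter] at hy
              exact hc y hy.1 (Finset.mem_biUnion.mpr ⟨D, hD, hy.2⟩)
            rcases Finset.mem_insert.mp hB with hB' | hB'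
            · rcases Finset.mem_insert.mp hC with hC' | hC'
              · exact absurd (hB'.trans hC'.symm) hBC
              · subst hB'; exact key C hC'
            · rcases Finset.mem_insert.mp hC with hC' | hC'
              · subst hC'; rw [Finset.inter_comm]; exact key B hB'
              · exact hMdisj B hB' C hC' hBC
        have := hMmax _ hins
        rw [Finset.card_insert_of_notMem hAnotM] at this
        omega
      have hpig : ∃ x ∈ V, r.factorial * (p+1)^r < (S.filter fun A => x ∈ A).card := by
        by_contra hc
        push_neg at hc
        have hsub : S ⊆ V.biUnion fun x => S.filter fun A => x ∈ A := by
          intro A hA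
          obtain ⟨x, hxA, hxV⟩ := hmeet A hA
          exact Finset.mem_biUnion.mpr ⟨x, hxV, Finset.mem_filter.mpr ⟨hA, hxA⟩⟩
        have : S.card ≤ (p+1) * (r+1) * (r.factorial * (p+1)^r) := by
          calc S.card ≤ ∑ x ∈ V, (S.filter fun A => x ∈ A).card :=
            le_trans (Finset.card_le_card hsub) Finset.card_biUnion_le
          _ ≤ V.card * (r.factorial * (p+1)^r) := by
              rw [← smul_eq_mul]
              exact Finset.sum_le_card_nsmul _ _ _ hc
          _ ≤ (p+1) * (r+1) * (r.factorial * (p+1)^r) :=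
              Nat.mul_le_mul_right _ hVcard
        have heq : (p+1) * (r+1) * (r.factorial * (p+1)^r) = (r+1).factorial * (p+1)^(r+1) := by
          rw [Nat.factorial_succ]; ring
        omega
      obtain ⟨x, hxV, hx⟩ := hpig
      set Sx := S.filter fun A => x ∈ A with hSx
      set L := Sx.image fun A => A.erase x with hL
      have hLcard : L.card = Sx.card := by
        apply Finset.card_image_of_injOn
        intro A hA B hB hAB
        have hxA : x ∈ A := (Finset.mem_filter.mp hA).2
        have hxB : x ∈ B := (Finset.mem_filter.mp hB).2
        have hAB' : A.erase x = B.erase x := hAB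
        rw [← Finset.insert_erase hxA, ← Finset.insert_erase hxB, hAB']
      have hLsize : ∀ T ∈ L, T.card = r := by
        intro T hT
        obtain ⟨A, hA, rfl⟩ := Finset.mem_image.mp hT
        rw [Finset.card_erase_of_mem (Finset.mem_filter.mp hA).2,
          hcard A (Finset.mem_filter.mp hA).1]
        omega
      obtain ⟨T', hT'L, hT'card, Y', hY'⟩ := ih L hLsize (by rw [hLcard]; exact hx)
      refine ⟨T'.image (insert x), ?_, ?_, insert x Y', ?_⟩
      · intro A hA
        obtain ⟨B, hB, rfl⟩ := Finset.mem_image.mp hA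
        obtain ⟨C, hC, rfl⟩ := Finset.mem_image.mp (hT'L hB)
        rw [Finset.insert_erase (Finset.mem_filter.mp hC).2]
        exact (Finset.mem_filter.mp hC).1
      · rw [Finset.card_image_of_injOn, hT'card]
        intro A hA B hB hAB
        have hxA : x ∉ A := by
          obtain ⟨C, hC, rfl⟩ := Finset.mem_image.mp (hT'L hA)
          exact Finset.notMem_erase x C
        have hxB : x ∉ B := by
          obtain ⟨C, hC, rfl⟩ := Finset.mem_image.mp (hT'L hB)
          exact Finset.notMem_erase x C
        rw [← Finset.erase_insert hxA, ← Finset.erase_insert hxB, hAB]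
      · intro A hA B hB hAB
        obtain ⟨A', hA', rfl⟩ := Finset.mem_image.mp hA
        obtain ⟨B', hB', rfl⟩ := Finset.mem_image.mp hB
        have hne : A' ≠ B' := fun h => hAB (by rw [h])
        have := hY' A' hA' B' hB' hne
        ext a
        simp only [Finset.mem_inter, Finset.mem_insert, ← this]
        tauto

/-- pick an element of a finset -/
noncomputable def pick (C : Finset ℕ) : ℕ := if h : C.Nonempty then C.min' h else 0

theorem pick_mem {C : Finset ℕ} (h : C.Nonempty) : pick C ∈ C := by
  rw [pick, dif_pos h]; exact Finset.min'_mem _ _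

theorem disjoint_inters_bound (r : ℕ) (𝒜 𝒞 : Finset (Finset ℕ))
    (h𝒜 : ∀ A ∈ 𝒜, A.card = r) (hint : IsIntersecting 𝒜)
    (h𝒞 : ∀ C ∈ 𝒞, (∃ A ∈ 𝒜, ∃ B ∈ 𝒜, A ∩ B = C) ∧ C.card < r)
    (hdisj : ∀ C ∈ 𝒞, ∀ D ∈ 𝒞, C ≠ D → C ∩ D = ∅) :
    𝒞.card ≤ r * (r.factorial * (r+1)^r + 1) := by
  classical
  rcases Finset.eq_empty_or_nonempty 𝒞 with rfl | ⟨C₀, hC₀⟩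
  · simp
  have hr : 1 ≤ r := by
    have := (h𝒞 C₀ hC₀).2; omega
  -- choose witnesses
  have h𝒞' : ∀ C : Finset ℕ, ∃ A B, C ∈ 𝒞 → (A ∈ 𝒜 ∧ B ∈ 𝒜 ∧ A ∩ B = C) := by
    intro C
    by_cases hC : C ∈ 𝒞
    · obtain ⟨⟨A, hA, B, hB, hAB⟩, -⟩ := h𝒞 C hC
      exact ⟨A, B, fun _ => ⟨hA, hB, hAB⟩⟩
    · exact ⟨∅, ∅, fun h => absurd h hC⟩
  choose fA fB hf using h𝒞'
  -- each C ∈ 𝒞 is nonempty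
  have hCne : ∀ C ∈ 𝒞, C.Nonempty := by
    intro C hC
    obtain ⟨hA, hB, hAB⟩ := hf C hC
    rw [← hAB]; exact hint _ hA _ hB
  by_contra hc
  push_neg at hc
  set K := r.factorial * (r+1)^r with hK
  set ℐ := 𝒞.image fA with hℐ
  -- fiberwise count
  have hfib : ∀ A : Finset ℕ, A ∈ ℐ → (𝒞.filter fun C => fA C = A).card ≤ r := by
    intro A hAℐ
    obtain ⟨C₁, hC₁, rfl⟩ := Finset.mem_image.mp hAℐ
    have hAcard := h𝒜 _ (hf C₁ hC₁).1
    rw [← hAcard]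
    refine Finset.card_le_card_of_injOn pick ?_ ?_
    · intro C hC
      rw [Finset.mem_coe, Finset.mem_filter] at hC
      have h1 : pick C ∈ C := pick_mem (hCne C hC.1)
      have h3 := (hf C hC.1).2.2
      have h2 : C ⊆ fA C := by
        conv_lhs => rw [← h3]
        exact Finset.inter_subset_left
      rw [hC.2] at h2
      exact h2 h1
    · intro C hC D hD hCD
      by_contra hne
      rw [Finset.mem_coe, Finset.mem_filter] at hC hD
      have := hdisj C hC.1 D hD.1 hne
      have h1 : pick C ∈ C ∩ D := by
        rw [Finset.mem_inter]
        exact ⟨pick_mem (hCne C hC.1), hCD ▸ pick_mem (hCne D hD.1)⟩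
      rw [this] at h1; exact absurd h1 (Finset.notMem_empty _)
  have hcount : 𝒞.card ≤ ℐ.card * r := by
    calc 𝒞.card = ∑ A ∈ ℐ, (𝒞.filter fun C => fA C = A).card :=
      Finset.card_eq_sum_card_fiberwise fun C hC => Finset.mem_image_of_mem fA hC
    _ ≤ ℐ.card * r := by
        rw [← smul_eq_mul]
        exact Finset.sum_le_card_nsmul _ _ _ hfib
  have hℐbig : K < ℐ.card := by
    by_contra hle
    push_neg at hle
    have : 𝒞.card ≤ K * r := hcount.trans (Nat.mul_le_mul_right _ hle)
    nlinarith [hc]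
  -- cards of members of ℐ
  have hℐcard : ∀ A ∈ ℐ, A.card = r := by
    intro A hA
    obtain ⟨C₁, hC₁, rfl⟩ := Finset.mem_image.mp hA
    exact h𝒜 _ (hf C₁ hC₁).1
  obtain ⟨𝒯, h𝒯ℐ, h𝒯card, Y, hY⟩ := sunflower_lemma r r ℐ hℐcard hℐbig
  -- pick representative C for each A ∈ 𝒯
  have hrep : ∀ A ∈ 𝒯, ∃ C ∈ 𝒞, fA C = A := by
    intro A hA
    obtain ⟨C₁, hC₁, h⟩ := Finset.mem_image.mp (h𝒯ℐ hA)
    exact ⟨C₁, hC₁, h⟩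
  have hrep' : ∀ A : Finset ℕ, ∃ C, A ∈ 𝒯 → (C ∈ 𝒞 ∧ fA C = A) := by
    intro A
    by_cases hA : A ∈ 𝒯
    · obtain ⟨C, hC, h⟩ := hrep A hA; exact ⟨C, fun _ => ⟨hC, h⟩⟩
    · exact ⟨∅, fun h => absurd h hA⟩
  choose g hg using hrep'
  -- 𝒯 has at least two elements, so Y ⊆ each member of 𝒯
  have h𝒯two : ∀ A ∈ 𝒯, Y ⊆ A := by
    intro A hA
    have : 1 < 𝒯.card := by omega
    obtain ⟨A', hA', hne⟩ := Finset.exists_mem_ne this A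
    rw [← hY A hA A' hA' (Ne.symm hne)]
    exact Finset.inter_subset_left
  -- key claim: each representative meets Y
  have hmeetY : ∀ A ∈ 𝒯, ((g A) ∩ Y).Nonempty := by
    intro A hA
    obtain ⟨hg𝒞, hgA⟩ := hg A hA
    set B := fB (g A) with hB
    have hB𝒜 : B ∈ 𝒜 := (hf _ hg𝒞).2.1
    have hgeq : g A = A ∩ B := by rw [← (hf _ hg𝒞).2.2, hgA]
    -- B misses some petal
    set P := (𝒯.erase A).filter fun A' => (B ∩ (A' \ Y)).Nonempty with hP
    have hPcard : P.card ≤ r := by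
      rw [← h𝒜 B hB𝒜]
      refine Finset.card_le_card_of_injOn (fun A' => pick (B ∩ (A' \ Y))) ?_ ?_
      · intro A' hA'
        rw [Finset.mem_coe, Finset.mem_filter] at hA'
        exact Finset.mem_of_mem_inter_left (pick_mem hA'.2)
      · intro A' hA' A'' hA'' heq
        by_contra hne
        have heq' : pick (B ∩ (A' \ Y)) = pick (B ∩ (A'' \ Y)) := heq
        rw [Finset.mem_coe, hP, Finset.mem_filter] at hA' hA''
        have h1 := pick_mem hA'.2
        have h2 := pick_mem hA''.2
        rw [heq'] at h1
        have hmem' : pick (B ∩ (A'' \ Y)) ∈ A' \ Y := Finset.mem_of_mem_inter_right h1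
        have hmem'' : pick (B ∩ (A'' \ Y)) ∈ A'' \ Y := Finset.mem_of_mem_inter_right h2
        have hint' := hY A' (Finset.mem_of_mem_erase hA'.1) A'' (Finset.mem_of_mem_erase hA''.1) hne
        have hYmem : pick (B ∩ (A'' \ Y)) ∈ A' ∩ A'' := Finset.mem_inter.mpr
          ⟨(Finset.mem_sdiff.mp hmem').1, (Finset.mem_sdiff.mp hmem'').1⟩
        rw [hint'] at hYmem
        exact (Finset.mem_sdiff.mp hmem').2 hYmem
    have hPlt : P.card < (𝒯.erase A).card := by
      rw [Finset.card_erase_of_mem hA, h𝒯card]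
      omega
    obtain ⟨A', hA'T, hA'P⟩ : ∃ A' ∈ 𝒯.erase A, A' ∉ P := by
      by_contra hcc
      push_neg at hcc
      exact absurd (Finset.card_le_card hcc) (not_le.mpr hPlt)
    have hA'𝒯 : A' ∈ 𝒯 := Finset.mem_of_mem_erase hA'T
    have hsub𝒜 : ∀ A'' ∈ 𝒯, A'' ∈ 𝒜 := by
      intro A'' hA''
      obtain ⟨C₂, hC₂, h⟩ := Finset.mem_image.mp (h𝒯ℐ hA'')
      rw [← h]; exact (hf C₂ hC₂).1
    have hBA' : (B ∩ A').Nonempty := hint _ hB𝒜 _ (hsub𝒜 A' hA'𝒯)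
    have hempty : B ∩ (A' \ Y) = ∅ := by
      by_contra hne
      exact hA'P (Finset.mem_filter.mpr ⟨hA'T,
        Finset.nonempty_iff_ne_empty.mpr hne⟩)
    set y := pick (B ∩ A') with hy
    have hymem := pick_mem hBA'
    rw [Finset.mem_inter] at hymem
    have hyY : y ∈ Y := by
      by_contra hyY
      have : y ∈ B ∩ (A' \ Y) := Finset.mem_inter.mpr
        ⟨hymem.1, Finset.mem_sdiff.mpr ⟨hymem.2, hyY⟩⟩
      rw [hempty] at this; exact absurd this (Finset.notMem_empty _)
    refine ⟨y, Finset.mem_inter.mpr ⟨?_, hyY⟩⟩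
    rw [hgeq, Finset.mem_inter]
    exact ⟨h𝒯two A hA hyY, hymem.1⟩
  -- final contradiction: 𝒯 injects into Y but |Y| ≤ r
  have hinj : 𝒯.card ≤ Y.card := by
    refine Finset.card_le_card_of_injOn (fun A => pick (g A ∩ Y)) ?_ ?_
    · intro A hA
      exact Finset.mem_of_mem_inter_right (pick_mem (hmeetY A hA))
    · intro A hA A' hA' heq
      by_contra hne
      have heq' : pick (g A ∩ Y) = pick (g A' ∩ Y) := heq
      rw [Finset.mem_coe] at hA hA'
      have hgne : g A ≠ g A' := by
        intro h
        exact hne (by rw [← (hg A hA).2, ← (hg A' hA').2, h])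
      have hdj := hdisj _ (hg A hA).1 _ (hg A' hA').1 hgne
      have h1 := Finset.mem_of_mem_inter_left (pick_mem (hmeetY A hA))
      have h2 := Finset.mem_of_mem_inter_left (pick_mem (hmeetY A' hA'))
      rw [heq'] at h1
      have : pick (g A' ∩ Y) ∈ g A ∩ g A' := Finset.mem_inter.mpr ⟨h1, h2⟩
      rw [hdj] at this; exact absurd this (Finset.notMem_empty _)
  have h𝒯ne : 𝒯.Nonempty := Finset.card_pos.mp (by omega)
  obtain ⟨A₀, hA₀⟩ := h𝒯ne
  have hYA₀ : Y ⊆ A₀ := h𝒯two A₀ hA₀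
  have := Finset.card_le_card hYA₀
  rw [hℐcard A₀ (h𝒯ℐ hA₀)] at this
  omega

/-- bound on the size of the cover set -/
def sBound (r : ℕ) : ℕ := r * (r.factorial * (r+1)^r + 1) * r

theorem ksets_card {n r : ℕ} {A : Finset ℕ} (h : A ∈ ksets n r) : A.card = r :=
  (Finset.mem_powersetCard.mp h).2

theorem ksets_sub {n r : ℕ} {A : Finset ℕ} (h : A ∈ ksets n r) : A ⊆ grd n :=
  (Finset.mem_powersetCard.mp h).1

theorem cover_lemma (n r : ℕ) (𝒜 : Finset (Finset ℕ)) (h𝒜 : 𝒜 ⊆ ksets n r)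
    (hint : IsIntersecting 𝒜) :
    ∃ S : Finset ℕ, S.card ≤ sBound r ∧
      ∀ A ∈ 𝒜, ∀ B ∈ 𝒜, (A ∩ B).card < r → ((A ∩ B) ∩ S).Nonempty := by
  classical
  set P := ((𝒜 ×ˢ 𝒜).image fun p => p.1 ∩ p.2).filter (fun C => C.card < r) with hP
  obtain ⟨𝒞, h𝒞mem, h𝒞max⟩ := Finset.exists_max_image
    (P.powerset.filter fun 𝒞 => ∀ C ∈ 𝒞, ∀ D ∈ 𝒞, C ≠ D → C ∩ D = ∅)
    Finset.card ⟨∅, by simp⟩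
  rw [Finset.mem_filter, Finset.mem_powerset] at h𝒞mem
  obtain ⟨h𝒞P, h𝒞disj⟩ := h𝒞mem
  have h𝒞prop : ∀ C ∈ 𝒞, (∃ A ∈ 𝒜, ∃ B ∈ 𝒜, A ∩ B = C) ∧ C.card < r := by
    intro C hC
    have := h𝒞P hC
    rw [hP, Finset.mem_filter, Finset.mem_image] at this
    obtain ⟨⟨p, hp, heq⟩, hlt⟩ := this
    rw [Finset.mem_product] at hp
    exact ⟨⟨p.1, hp.1, p.2, hp.2, heq⟩, hlt⟩
  have h𝒞card : 𝒞.card ≤ r * (r.factorial * (r+1)^r + 1) :=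
    disjoint_inters_bound r 𝒜 𝒞 (fun A hA => ksets_card (h𝒜 hA)) hint h𝒞prop h𝒞disj
  refine ⟨𝒞.biUnion id, ?_, ?_⟩
  · calc (𝒞.biUnion id).card ≤ ∑ C ∈ 𝒞, C.card := Finset.card_biUnion_le
    _ ≤ 𝒞.card * r := by
        rw [← smul_eq_mul]
        exact Finset.sum_le_card_nsmul _ _ _ fun C hC => le_of_lt (h𝒞prop C hC).2
    _ ≤ sBound r := Nat.mul_le_mul_right _ h𝒞card
  · intro A hA B hB hlt
    by_contra hc
    rw [Finset.not_nonempty_iff_eq_empty] at hc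
    set C := A ∩ B with hC
    have hCP : C ∈ P := by
      rw [hP, Finset.mem_filter, Finset.mem_image]
      exact ⟨⟨(A, B), Finset.mem_product.mpr ⟨hA, hB⟩, rfl⟩, hlt⟩
    have hCne : C.Nonempty := hint A hA B hB
    have hC𝒞 : C ∉ 𝒞 := by
      intro h
      obtain ⟨x, hx⟩ := hCne
      have : x ∈ C ∩ 𝒞.biUnion id := Finset.mem_inter.mpr
        ⟨hx, Finset.mem_biUnion.mpr ⟨C, h, hx⟩⟩
      rw [hc] at this; exact absurd this (Finset.notMem_empty _)
    have hkey : ∀ D ∈ 𝒞, C ∩ D = ∅ := by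
      intro D hD
      rw [Finset.eq_empty_iff_forall_notMem]
      intro y hy
      rw [Finset.mem_inter] at hy
      have : y ∈ C ∩ 𝒞.biUnion id := Finset.mem_inter.mpr
        ⟨hy.1, Finset.mem_biUnion.mpr ⟨D, hD, hy.2⟩⟩
      rw [hc] at this; exact absurd this (Finset.notMem_empty _)
    have hins : insert C 𝒞 ∈ P.powerset.filter
        fun 𝒞 => ∀ C ∈ 𝒞, ∀ D ∈ 𝒞, C ≠ D → C ∩ D = ∅ := by
      rw [Finset.mem_filter, Finset.mem_powerset]
      refine ⟨Finset.insert_subset hCP h𝒞P, ?_⟩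
      intro X hX Y hY hXY
      rcases Finset.mem_insert.mp hX with hX' | hX'
      · rcases Finset.mem_insert.mp hY with hY' | hY'
        · exact absurd (hX'.trans hY'.symm) hXY
        · subst hX'; exact hkey Y hY'
      · rcases Finset.mem_insert.mp hY with hY' | hY'
        · subst hY'; rw [Finset.inter_comm]; exact hkey X hX'
        · exact h𝒞disj X hX' Y hY' hXY
    have := h𝒞max _ hins
    rw [Finset.card_insert_of_notMem hC𝒞] at this
    omega

-- β, α infrastructure
theorem beta_bddAbove (n r k : ℕ) :
    BddAbove {m | ∃ 𝒜 ⊆ ksets n r, IsIntersecting 𝒜 ∧ (interk 𝒜 k).card = m} := by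
  refine ⟨(ksets n k).card, fun m hm => ?_⟩
  obtain ⟨𝒜, h𝒜, hint, hm⟩ := hm
  rw [← hm]
  apply Finset.card_le_card
  intro C hC
  rw [interk, Finset.mem_filter, Finset.mem_image] at hC
  obtain ⟨⟨p, hp, heq⟩, hcard⟩ := hC
  rw [Finset.mem_product] at hp
  rw [ksets, Finset.mem_powersetCard]
  exact ⟨heq ▸ (Finset.inter_subset_left.trans (ksets_sub (h𝒜 hp.1))), hcard⟩

theorem beta_set_nonempty (n r k : ℕ) :
    Set.Nonempty {m | ∃ 𝒜 ⊆ ksets n r, IsIntersecting 𝒜 ∧ (interk 𝒜 k).card = m} :=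
  ⟨0, ∅, Finset.empty_subset _, fun A hA => absurd hA (Finset.notMem_empty _), by
    simp [interk]⟩

theorem le_beta {n r k m : ℕ} (𝒜 : Finset (Finset ℕ)) (h𝒜 : 𝒜 ⊆ ksets n r)
    (hint : IsIntersecting 𝒜) (hm : (interk 𝒜 k).card = m) : m ≤ beta n r k :=
  le_csSup (beta_bddAbove n r k) ⟨𝒜, h𝒜, hint, hm⟩

theorem beta_le {n r k m : ℕ}
    (h : ∀ 𝒜 ⊆ ksets n r, IsIntersecting 𝒜 → (interk 𝒜 k).card ≤ m) :
    beta n r k ≤ m := by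
  apply csSup_le (beta_set_nonempty n r k)
  rintro b ⟨𝒜, h𝒜, hint, rfl⟩
  exact h 𝒜 h𝒜 hint

theorem beta_attained (n r k : ℕ) :
    ∃ 𝒜 ⊆ ksets n r, IsIntersecting 𝒜 ∧ (interk 𝒜 k).card = beta n r k :=
  Nat.sSup_mem (beta_set_nonempty n r k) (beta_bddAbove n r k)

theorem beta_one_le (n r : ℕ) : beta n r 1 ≤ sBound r + 1 := by
  apply beta_le
  intro 𝒜 h𝒜 hint
  rcases Nat.lt_or_ge r 2 with hr | hr
  · -- r ≤ 1 : 𝒜 has at most one member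
    have h1 : ∀ C ∈ interk 𝒜 1, C ∈ 𝒜 := by
      intro C hC
      rw [interk, Finset.mem_filter, Finset.mem_image] at hC
      obtain ⟨⟨p, hp, heq⟩, hcard⟩ := hC
      rw [Finset.mem_product] at hp
      have hp1 := ksets_card (h𝒜 hp.1)
      have hsub : C ⊆ p.1 := heq ▸ Finset.inter_subset_left
      have : C = p.1 := Finset.eq_of_subset_of_card_le hsub (by omega)
      rw [this]; exact hp.1
    have h2 : (interk 𝒜 1).card ≤ 1 := by
      by_contra hc
      push_neg at hc
      obtain ⟨C, hC, D, hD, hCD⟩ := Finset.one_lt_card.mp hc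
      have hCcard : C.card = 1 := (Finset.mem_filter.mp hC).2
      have hDcard : D.card = 1 := (Finset.mem_filter.mp hD).2
      have hne := hint C (h1 C hC) D (h1 D hD)
      obtain ⟨x, hx⟩ := hne
      rw [Finset.mem_inter] at hx
      obtain ⟨c, hc'⟩ := Finset.card_eq_one.mp hCcard
      obtain ⟨d, hd'⟩ := Finset.card_eq_one.mp hDcard
      apply hCD
      rw [hc', hd'] at hx ⊢
      simp only [Finset.mem_singleton] at hx
      rw [← hx.1, ← hx.2]
    omega
  · obtain ⟨S, hScard, hS⟩ := cover_lemma n r 𝒜 h𝒜 hint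
    have : (interk 𝒜 1).card ≤ S.card := by
      refine Finset.card_le_card_of_injOn pick ?_ ?_
      · intro C hC
        rw [Finset.mem_coe, interk, Finset.mem_filter, Finset.mem_image] at hC
        obtain ⟨⟨p, hp, heq⟩, hcard⟩ := hC
        rw [Finset.mem_product] at hp
        have hCS := hS p.1 hp.1 p.2 hp.2 (by rw [heq, hcard]; omega)
        rw [heq] at hCS
        obtain ⟨x, hx⟩ := hCS
        rw [Finset.mem_inter] at hx
        have hCone : C = {x} := by
          obtain ⟨c, hc'⟩ := Finset.card_eq_one.mp hcard
          rw [hc'] at hx ⊢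
          rw [Finset.mem_singleton] at hx
          rw [hx.1]
        have : pick C ∈ C := pick_mem (Finset.card_pos.mp (by omega))
        rw [hCone, Finset.mem_singleton] at this
        rw [this, hCone] at *
        exact hx.2
      · intro C hC D hD heq
        rw [Finset.mem_coe, interk, Finset.mem_filter] at hC hD
        obtain ⟨c, hc'⟩ := Finset.card_eq_one.mp hC.2
        obtain ⟨d, hd'⟩ := Finset.card_eq_one.mp hD.2
        subst hc'; subst hd'
        have h1 : pick {c} ∈ ({c} : Finset ℕ) := pick_mem ⟨c, Finset.mem_singleton_self c⟩
        have h2 : pick {d} ∈ ({d} : Finset ℕ) := pick_mem ⟨d, Finset.mem_singleton_self d⟩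
        rw [Finset.mem_singleton] at h1 h2
        rw [← h1, ← h2, heq]
    omega

theorem alpha_bddAbove (r : ℕ) : BddAbove {m | ∃ n, r ≤ n ∧ beta n r 1 = m} := by
  refine ⟨sBound r + 1, fun m hm => ?_⟩
  obtain ⟨n, hn, hm⟩ := hm
  exact hm ▸ beta_one_le n r

theorem beta_one_le_alpha (n r : ℕ) (h : r ≤ n) : beta n r 1 ≤ alpha r :=
  le_csSup (alpha_bddAbove r) ⟨n, h, rfl⟩

theorem alpha_attained (r : ℕ) : ∃ n, r ≤ n ∧ beta n r 1 = alpha r := by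
  have hne : Set.Nonempty {m | ∃ n, r ≤ n ∧ beta n r 1 = m} := ⟨beta r r 1, r, le_refl r, rfl⟩
  exact Nat.sSup_mem hne (alpha_bddAbove r)

theorem grd_card (n : ℕ) : (grd n).card = n := by
  rw [grd, Nat.card_Icc]; omega

/-- the link of a set `D` in the family `𝒜` -/
def link (𝒜 : Finset (Finset ℕ)) (D : Finset ℕ) : Finset (Finset ℕ) :=
  (𝒜.filter fun A => D ⊆ A).image fun A => A \ D

theorem mem_interk {𝒜 : Finset (Finset ℕ)} {k : ℕ} {C : Finset ℕ} :
    C ∈ interk 𝒜 k ↔ (∃ A ∈ 𝒜, ∃ B ∈ 𝒜, A ∩ B = C) ∧ C.card = k := by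
  rw [interk, Finset.mem_filter, Finset.mem_image]
  constructor
  · rintro ⟨⟨p, hp, heq⟩, hcard⟩
    rw [Finset.mem_product] at hp
    exact ⟨⟨p.1, hp.1, p.2, hp.2, heq⟩, hcard⟩
  · rintro ⟨⟨A, hA, B, hB, heq⟩, hcard⟩
    exact ⟨⟨(A, B), Finset.mem_product.mpr ⟨hA, hB⟩, heq⟩, hcard⟩

theorem upper_bound (n r k : ℕ) (hk : 2 ≤ k) (hkr : k ≤ r) (hrn : r ≤ n) :
    beta n r k ≤ alpha (r-k+1) * n.choose (k-1) + (sBound r)^2 * n.choose (k-2) := by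
  apply beta_le
  intro 𝒜 h𝒜 hint
  classical
  obtain ⟨S, hScard, hS⟩ := cover_lemma n r 𝒜 h𝒜 hint
  set Good := ((grd n).powersetCard (k-1)).filter
    (fun D => IsIntersecting (link 𝒜 D)) with hGood
  set GP := Good.biUnion
    (fun D => (interk (link 𝒜 D) 1).image (fun T => D ∪ T)) with hGP
  set BP := ((grd n).powersetCard k).filter (fun C => 2 ≤ (C ∩ S).card) with hBP
  have hcover : interk 𝒜 k ⊆ GP ∪ BP := by
    intro C hC
    obtain ⟨⟨A, hA, B, hB, heq⟩, hCk⟩ := mem_interk.mp hC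
    have hCgrd : C ⊆ grd n := by
      rw [← heq]
      exact Finset.inter_subset_left.trans (ksets_sub (h𝒜 hA))
    rw [Finset.mem_union]
    by_cases hgood : ∃ D ⊆ C, D.card = k-1 ∧ IsIntersecting (link 𝒜 D)
    · left
      obtain ⟨D, hDC, hDcard, hDint⟩ := hgood
      rw [Finset.mem_biUnion]
      refine ⟨D, Finset.mem_filter.mpr
        ⟨Finset.mem_powersetCard.mpr ⟨hDC.trans hCgrd, hDcard⟩, hDint⟩, ?_⟩
      rw [Finset.mem_image]
      have hDA : D ⊆ A := hDC.trans (heq ▸ Finset.inter_subset_left)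
      have hDB : D ⊆ B := hDC.trans (heq ▸ Finset.inter_subset_right)
      refine ⟨C \ D, ?_, Finset.union_sdiff_of_subset hDC⟩
      rw [mem_interk]
      constructor
      · refine ⟨A \ D, ?_, B \ D, ?_, ?_⟩
        · exact Finset.mem_image_of_mem _ (Finset.mem_filter.mpr ⟨hA, hDA⟩)
        · exact Finset.mem_image_of_mem _ (Finset.mem_filter.mpr ⟨hB, hDB⟩)
        · rw [← heq]
          ext x
          simp only [Finset.mem_inter, Finset.mem_sdiff]
          tauto
      · rw [Finset.card_sdiff_of_subset hDC]
        omega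
    · right
      rw [Finset.mem_filter]
      refine ⟨Finset.mem_powersetCard.mpr ⟨hCgrd, hCk⟩, ?_⟩
      by_contra hlt
      push_neg at hlt
      have hcs : (C \ S).card + (C ∩ S).card = C.card :=
        Finset.card_sdiff_add_card_inter C S
      have hbig : k - 1 ≤ (C \ S).card := by omega
      obtain ⟨D, hDCS, hDcard⟩ := Finset.exists_subset_card_eq hbig
      have hDC : D ⊆ C := hDCS.trans Finset.sdiff_subset
      have hnotint : ¬ IsIntersecting (link 𝒜 D) := by
        intro h
        exact hgood ⟨D, hDC, hDcard, h⟩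
      rw [IsIntersecting] at hnotint
      push_neg at hnotint
      obtain ⟨P, hP, Q, hQ, hPQ⟩ := hnotint
      rw [link, Finset.mem_image] at hP hQ
      obtain ⟨A', hA', rfl⟩ := hP
      obtain ⟨B', hB', rfl⟩ := hQ
      rw [Finset.mem_filter] at hA' hB'
      have hABD : A' ∩ B' = D := by
        apply Finset.Subset.antisymm
        · intro x hx
          by_contra hxD
          have : x ∈ (A' \ D) ∩ (B' \ D) := by
            rw [Finset.mem_inter] at hx ⊢
            exact ⟨Finset.mem_sdiff.mpr ⟨hx.1, hxD⟩, Finset.mem_sdiff.mpr ⟨hx.2, hxD⟩⟩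
          rw [hPQ] at this
          exact absurd this (Finset.notMem_empty _)
        · exact Finset.subset_inter hA'.2 hB'.2
      have hlt' : (A' ∩ B').card < r := by rw [hABD, hDcard]; omega
      have := hS A' hA'.1 B' hB'.1 hlt'
      rw [hABD] at this
      obtain ⟨x, hx⟩ := this
      rw [Finset.mem_inter] at hx
      have := hDCS hx.1
      rw [Finset.mem_sdiff] at this
      exact this.2 hx.2
  have hGPcard : GP.card ≤ alpha (r-k+1) * n.choose (k-1) := by
    calc GP.card ≤ ∑ D ∈ Good, ((interk (link 𝒜 D) 1).image (fun T => D ∪ T)).card :=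
      Finset.card_biUnion_le
    _ ≤ ∑ D ∈ Good, (interk (link 𝒜 D) 1).card :=
        Finset.sum_le_sum fun D _ => Finset.card_image_le
    _ ≤ Good.card * alpha (r-k+1) := by
        rw [← smul_eq_mul]
        apply Finset.sum_le_card_nsmul
        intro D hD
        rw [hGood, Finset.mem_filter, Finset.mem_powersetCard] at hD
        obtain ⟨⟨hDgrd, hDcard⟩, hDint⟩ := hD
        have hsub : link 𝒜 D ⊆ ksets n (r-k+1) := by
          intro P hP
          rw [link, Finset.mem_image] at hP
          obtain ⟨A, hA, rfl⟩ := hP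
          rw [Finset.mem_filter] at hA
          rw [ksets, Finset.mem_powersetCard]
          constructor
          · exact Finset.sdiff_subset.trans (ksets_sub (h𝒜 hA.1))
          · rw [Finset.card_sdiff_of_subset hA.2, hDcard, ksets_card (h𝒜 hA.1)]
            omega
        calc (interk (link 𝒜 D) 1).card ≤ beta n (r-k+1) 1 :=
          le_beta (link 𝒜 D) hsub hDint rfl
        _ ≤ alpha (r-k+1) := beta_one_le_alpha n (r-k+1) (by omega)
    _ ≤ n.choose (k-1) * alpha (r-k+1) := by
        apply Nat.mul_le_mul_right
        have h1 : Good.card ≤ ((grd n).powersetCard (k-1)).card :=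
          Finset.card_le_card (Finset.filter_subset _ _)
        rwa [Finset.card_powersetCard, grd_card] at h1
    _ ≤ alpha (r-k+1) * n.choose (k-1) := le_of_eq (Nat.mul_comm _ _)
  have hBPcard : BP.card ≤ (sBound r)^2 * n.choose (k-2) := by
    have hinj : BP.card ≤ (S ×ˢ (S ×ˢ (grd n).powersetCard (k-2))).card := by
      refine Finset.card_le_card_of_injOn
        (fun C => (pick (C ∩ S), pick ((C ∩ S).erase (pick (C ∩ S))),
          (C.erase (pick (C ∩ S))).erase (pick ((C ∩ S).erase (pick (C ∩ S)))))) ?_ ?_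
      · intro C hC
        rw [Finset.mem_coe, hBP, Finset.mem_filter, Finset.mem_powersetCard] at hC
        obtain ⟨⟨hCgrd, hCk⟩, hCS⟩ := hC
        have hne1 : (C ∩ S).Nonempty := Finset.card_pos.mp (by omega)
        have ha := pick_mem hne1
        set a := pick (C ∩ S)
        have hne2 : ((C ∩ S).erase a).Nonempty := by
          apply Finset.card_pos.mp
          rw [Finset.card_erase_of_mem ha]
          omega
        have hb := pick_mem hne2
        set b := pick ((C ∩ S).erase a)
        have hbCS : b ∈ C ∩ S := Finset.mem_of_mem_erase hb
        have hba : b ≠ a := Finset.ne_of_mem_erase hb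
        rw [Finset.mem_coe, Finset.mem_product]
        refine ⟨(Finset.mem_inter.mp ha).2, ?_⟩
        rw [Finset.mem_product]
        refine ⟨(Finset.mem_inter.mp hbCS).2, ?_⟩
        rw [Finset.mem_powersetCard]
        constructor
        · exact (Finset.erase_subset _ _).trans ((Finset.erase_subset _ _).trans hCgrd)
        · rw [Finset.card_erase_of_mem, Finset.card_erase_of_mem
            (Finset.mem_inter.mp ha).1]
          · omega
          · exact Finset.mem_erase.mpr ⟨hba, (Finset.mem_inter.mp hbCS).1⟩
      · intro C hC C' hC' heq
        simp only [Prod.mk.injEq] at heq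
        obtain ⟨h1, h2, h3⟩ := heq
        rw [Finset.mem_coe, hBP, Finset.mem_filter, Finset.mem_powersetCard] at hC hC'
        -- reconstruct C from the triple
        have key : ∀ X : Finset ℕ, X ⊆ grd n → X.card = k → 2 ≤ (X ∩ S).card →
            X = insert (pick (X ∩ S))
              (insert (pick ((X ∩ S).erase (pick (X ∩ S))))
                ((X.erase (pick (X ∩ S))).erase (pick ((X ∩ S).erase (pick (X ∩ S)))))) := by
          intro X _ hXk hXS
          have hne1 : (X ∩ S).Nonempty := Finset.card_pos.mp (by omega)
          have ha := pick_mem hne1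
          set a := pick (X ∩ S)
          have hne2 : ((X ∩ S).erase a).Nonempty := by
            apply Finset.card_pos.mp
            rw [Finset.card_erase_of_mem ha]
            omega
          have hb := pick_mem hne2
          set b := pick ((X ∩ S).erase a)
          have hbX : b ∈ X := (Finset.mem_inter.mp (Finset.mem_of_mem_erase hb)).1
          have hba : b ≠ a := Finset.ne_of_mem_erase hb
          have haX : a ∈ X := (Finset.mem_inter.mp ha).1
          rw [Finset.insert_erase (Finset.mem_erase.mpr ⟨hba, hbX⟩),
            Finset.insert_erase haX]
        have e1 := key C hC.1.1 hC.1.2 hC.2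
        have e2 := key C' hC'.1.1 hC'.1.2 hC'.2
        conv_lhs => rw [e1]
        conv_rhs => rw [e2]
        rw [h3, h2, h1]
    calc BP.card ≤ (S ×ˢ (S ×ˢ (grd n).powersetCard (k-2))).card := hinj
    _ = S.card * (S.card * n.choose (k-2)) := by
        rw [Finset.card_product, Finset.card_product, Finset.card_powersetCard, grd_card]
    _ ≤ sBound r * (sBound r * n.choose (k-2)) := by
        exact Nat.mul_le_mul hScard (Nat.mul_le_mul_right _ hScard)
    _ = (sBound r)^2 * n.choose (k-2) := by ring
  calc (interk 𝒜 k).card ≤ (GP ∪ BP).card := Finset.card_le_card hcover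
  _ ≤ GP.card + BP.card := Finset.card_union_le _ _
  _ ≤ alpha (r-k+1) * n.choose (k-1) + (sBound r)^2 * n.choose (k-2) :=
      Nat.add_le_add hGPcard hBPcard

theorem lower_bound (n r k m₀ : ℕ) (hk : 2 ≤ k) (hkr : k ≤ r) (hm₀ : m₀ ≤ n)
    (ℬ : Finset (Finset ℕ)) (hℬ : ℬ ⊆ ksets m₀ (r-k+1)) (hℬint : IsIntersecting ℬ) :
    (interk ℬ 1).card * (n - m₀).choose (k-1) ≤ beta n r k := by
  classical
  set TS := (Finset.Icc (m₀+1) n).powersetCard (k-1) with hTS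
  set 𝒜 := (ℬ ×ˢ TS).image (fun p => p.1 ∪ p.2) with h𝒜
  have hBsub : ∀ B ∈ ℬ, B ⊆ Finset.Icc 1 m₀ := fun B hB => ksets_sub (hℬ hB)
  have hSpsub : ∀ Sp ∈ TS, Sp ⊆ Finset.Icc (m₀+1) n :=
    fun Sp hSp => (Finset.mem_powersetCard.mp hSp).1
  have hdisj : ∀ (X Y : Finset ℕ), X ⊆ Finset.Icc 1 m₀ → Y ⊆ Finset.Icc (m₀+1) n →
      Disjoint X Y := by
    intro X Y hX hY
    rw [Finset.disjoint_left]
    intro a haX haY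
    have h1 := Finset.mem_Icc.mp (hX haX)
    have h2 := Finset.mem_Icc.mp (hY haY)
    omega
  have h𝒜sub : 𝒜 ⊆ ksets n r := by
    intro A hA
    rw [h𝒜, Finset.mem_image] at hA
    obtain ⟨p, hp, rfl⟩ := hA
    rw [Finset.mem_product] at hp
    rw [ksets, Finset.mem_powersetCard]
    constructor
    · apply Finset.union_subset
      · exact (hBsub _ hp.1).trans (Finset.Icc_subset_Icc_right hm₀)
      · exact (hSpsub _ hp.2).trans (Finset.Icc_subset_Icc_left (by omega))
    · rw [Finset.card_union_of_disjoint (hdisj _ _ (hBsub _ hp.1) (hSpsub _ hp.2)),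
        ksets_card (hℬ hp.1), (Finset.mem_powersetCard.mp hp.2).2]
      omega
  have h𝒜int : IsIntersecting 𝒜 := by
    intro A hA A' hA'
    rw [h𝒜, Finset.mem_image] at hA hA'
    obtain ⟨p, hp, rfl⟩ := hA
    obtain ⟨q, hq, rfl⟩ := hA'
    rw [Finset.mem_product] at hp hq
    obtain ⟨x, hx⟩ := hℬint _ hp.1 _ hq.1
    rw [Finset.mem_inter] at hx
    exact ⟨x, Finset.mem_inter.mpr ⟨Finset.mem_union_left _ hx.1,
      Finset.mem_union_left _ hx.2⟩⟩
  -- the injection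
  have hinj : ((interk ℬ 1) ×ˢ TS).card ≤ (interk 𝒜 k).card := by
    refine Finset.card_le_card_of_injOn (fun p => p.1 ∪ p.2) ?_ ?_
    · intro p hp
      rw [Finset.mem_coe, Finset.mem_product] at hp
      obtain ⟨⟨B, hB, B', hB', heq⟩, hT1⟩ := mem_interk.mp hp.1
      rw [Finset.mem_coe, mem_interk]
      constructor
      · refine ⟨B ∪ p.2, ?_, B' ∪ p.2, ?_, ?_⟩
        · exact Finset.mem_image_of_mem (fun q => q.1 ∪ q.2)
            (show (B, p.2) ∈ ℬ ×ˢ TS from Finset.mem_product.mpr ⟨hB, hp.2⟩)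
        · exact Finset.mem_image_of_mem (fun q => q.1 ∪ q.2)
            (show (B', p.2) ∈ ℬ ×ˢ TS from Finset.mem_product.mpr ⟨hB', hp.2⟩)
        · show (B ∪ p.2) ∩ (B' ∪ p.2) = p.1 ∪ p.2
          rw [← heq]
          ext x
          simp only [Finset.mem_inter, Finset.mem_union]
          tauto
      · have hTsub : p.1 ⊆ Finset.Icc 1 m₀ := by
          rw [← heq]
          exact Finset.inter_subset_left.trans (hBsub _ hB)
        rw [Finset.card_union_of_disjoint (hdisj _ _ hTsub (hSpsub _ hp.2)), hT1,
          (Finset.mem_powersetCard.mp hp.2).2]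
        omega
    · intro p hp q hq heq
      have heq' : p.1 ∪ p.2 = q.1 ∪ q.2 := heq
      rw [Finset.mem_coe, Finset.mem_product] at hp hq
      have hsub1 : ∀ (x : Finset ℕ × Finset ℕ), x ∈ (interk ℬ 1) ×ˢ TS →
          x.1 ⊆ Finset.Icc 1 m₀ := by
        intro x hx
        rw [Finset.mem_product] at hx
        obtain ⟨⟨B, hB, B', hB', heqx⟩, -⟩ := mem_interk.mp hx.1
        rw [← heqx]
        exact Finset.inter_subset_left.trans (hBsub _ hB)
      have key : ∀ (x : Finset ℕ × Finset ℕ), x.1 ⊆ Finset.Icc 1 m₀ →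
          x.2 ⊆ Finset.Icc (m₀+1) n →
          x.1 = (x.1 ∪ x.2) ∩ Finset.Icc 1 m₀ ∧
          x.2 = (x.1 ∪ x.2) ∩ Finset.Icc (m₀+1) n := by
        intro x hx1 hx2
        constructor <;> ext a <;>
          simp only [Finset.mem_inter, Finset.mem_union] <;>
          constructor
        · intro ha; exact ⟨Or.inl ha, hx1 ha⟩
        · rintro ⟨ha | ha, hIcc⟩
          · exact ha
          · have h1 := Finset.mem_Icc.mp (hx2 ha)
            have h2 := Finset.mem_Icc.mp hIcc
            omega
        · intro ha; exact ⟨Or.inr ha, hx2 ha⟩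
        · rintro ⟨ha | ha, hIcc⟩
          · have h1 := Finset.mem_Icc.mp (hx1 ha)
            have h2 := Finset.mem_Icc.mp hIcc
            omega
          · exact ha
      obtain ⟨hp1, hp2⟩ := key p (hsub1 p (Finset.mem_product.mpr hp))
        (hSpsub _ hp.2)
      obtain ⟨hq1, hq2⟩ := key q (hsub1 q (Finset.mem_product.mpr hq))
        (hSpsub _ hq.2)
      have e1 : p.1 = q.1 := by rw [hp1, hq1, heq']
      have e2 : p.2 = q.2 := by rw [hp2, hq2, heq']
      exact Prod.ext e1 e2
  have hcard : ((interk ℬ 1) ×ˢ TS).card = (interk ℬ 1).card * (n - m₀).choose (k-1) := by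
    rw [Finset.card_product, hTS, Finset.card_powersetCard, Nat.card_Icc]
    congr 2
    omega
  rw [← hcard]
  exact le_trans hinj (le_beta 𝒜 h𝒜sub h𝒜int rfl)

theorem choose_shift (m₀ : ℕ) : ∀ n j : ℕ, n.choose (j+1) ≤ (n - m₀).choose (j+1) + m₀ * n.choose j := by
  induction m₀ with
  | zero => intro n j; simp
  | succ m ih =>
    intro n j
    have h1 := ih n j
    rcases Nat.eq_zero_or_pos (n - m) with h | h
    · have h2 : n - (m+1) = 0 := by omega
      rw [h2]
      rw [h] at h1
      have h3 : Nat.choose 0 (j+1) = 0 := Nat.choose_eq_zero_of_lt (by omega)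
      rw [h3] at h1
      calc n.choose (j+1) ≤ 0 + m * n.choose j := h1
      _ ≤ Nat.choose 0 (j+1) + (m+1) * n.choose j := by
          rw [h3]
          exact Nat.add_le_add_left (Nat.mul_le_mul_right _ (by omega)) _
    · have ht : n - m = (n - (m+1)) + 1 := by omega
      set t := n - (m+1) with h2
      have hpas : (t+1).choose (j+1) = t.choose j + t.choose (j+1) :=
        Nat.choose_succ_succ t j
      have htn : t ≤ n := by omega
      have hmono : t.choose j ≤ n.choose j := Nat.choose_le_choose j htn
      calc n.choose (j+1) ≤ (n-m).choose (j+1) + m * n.choose j := h1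
      _ = t.choose j + t.choose (j+1) + m * n.choose j := by rw [ht, hpas]
      _ ≤ n.choose j + t.choose (j+1) + m * n.choose j := by
          exact Nat.add_le_add_right (Nat.add_le_add_right hmono _) _
      _ = t.choose (j+1) + (m+1) * n.choose j := by ring
      _ = (n - (m+1)).choose (j+1) + (m+1) * n.choose j := by rw [← h2]


/-- Asymptotics: `β(n,r,k) = α^(r-k+1)·C(n,k-1) + O(n^(k-2))` for fixed `2 ≤ k ≤ r`. -/
theorem stmt_3 (k r : ℕ) (hk : 2 ≤ k) (hkr : k ≤ r) :
    ∃ c : ℝ, 0 < c ∧ ∃ n₀ : ℕ, ∀ n, n₀ ≤ n →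
      |(beta n r k : ℝ) - (alpha (r - k + 1) : ℝ) * (n.choose (k - 1) : ℝ)| ≤
        c * (n : ℝ) ^ ((k : ℤ) - 2) := by
  obtain ⟨m₀, hm₀r', hm₀⟩ := alpha_attained (r - k + 1)
  obtain ⟨ℬ, hℬsub, hℬint, hℬcard⟩ := beta_attained m₀ (r - k + 1) 1
  refine ⟨((alpha (r-k+1) : ℝ) * m₀ + ((sBound r)^2 : ℕ) + 1 : ℝ), by positivity,
    max r m₀ + 1, ?_⟩
  intro n hn
  have hle1 := le_max_left r m₀
  have hle2 := le_max_right r m₀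
  have hrn : r ≤ n := by omega
  have hm₀n : m₀ ≤ n := by omega
  have hup := upper_bound n r k hk hkr hrn
  have hlow : alpha (r-k+1) * (n - m₀).choose (k-1) ≤ beta n r k := by
    have h := lower_bound n r k m₀ hk hkr hm₀n ℬ hℬsub hℬint
    rw [hℬcard, hm₀] at h
    exact h
  have hchoose : n.choose (k-1) ≤ (n - m₀).choose (k-1) + m₀ * n.choose (k-2) := by
    have h := choose_shift m₀ n (k-2)
    have hk1 : k - 1 = (k-2) + 1 := by omega
    rw [hk1]; exact h
  have hpow : n.choose (k-2) ≤ n^(k-2) :=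
    le_trans (Nat.choose_le_descFactorial n (k-2)) (Nat.descFactorial_le_pow n (k-2))
  have hN1 : beta n r k ≤ alpha (r-k+1) * n.choose (k-1) + (sBound r)^2 * n^(k-2) := by
    refine le_trans hup ?_
    gcongr
  have hN2 : alpha (r-k+1) * n.choose (k-1) ≤
      beta n r k + alpha (r-k+1) * m₀ * n^(k-2) := by
    calc alpha (r-k+1) * n.choose (k-1)
        ≤ alpha (r-k+1) * ((n - m₀).choose (k-1) + m₀ * n.choose (k-2)) := by gcongr
    _ = alpha (r-k+1) * (n - m₀).choose (k-1) + alpha (r-k+1) * m₀ * n.choose (k-2) := by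
        ring
    _ ≤ beta n r k + alpha (r-k+1) * m₀ * n^(k-2) := by
        refine Nat.add_le_add hlow ?_
        gcongr
  have hz : ((k : ℤ) - 2) = ((k - 2 : ℕ) : ℤ) := by omega
  rw [hz, zpow_natCast]
  have hX : (0:ℝ) ≤ (n:ℝ)^(k-2) := by positivity
  have hc1 : (beta n r k : ℝ) ≤ (alpha (r-k+1) : ℝ) * (n.choose (k-1) : ℝ) +
      ((sBound r)^2 : ℕ) * (n:ℝ)^(k-2) := by
    have h := (Nat.cast_le (α := ℝ)).mpr hN1
    push_cast at h ⊢
    linarith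
  have hc2 : (alpha (r-k+1) : ℝ) * (n.choose (k-1) : ℝ) ≤ (beta n r k : ℝ) +
      (alpha (r-k+1) : ℝ) * (m₀ : ℝ) * (n:ℝ)^(k-2) := by
    have h := (Nat.cast_le (α := ℝ)).mpr hN2
    push_cast at h ⊢
    linarith
  rw [abs_le]
  constructor
  · have hexp : ((alpha (r-k+1) : ℝ) * m₀ + ((sBound r)^2 : ℕ) + 1) * (n:ℝ)^(k-2) =
        (alpha (r-k+1) : ℝ) * (m₀:ℝ) * (n:ℝ)^(k-2) + (((sBound r)^2 : ℕ):ℝ) * (n:ℝ)^(k-2)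
          + (n:ℝ)^(k-2) := by ring
    have h1 : (0:ℝ) ≤ (((sBound r)^2 : ℕ):ℝ) * (n:ℝ)^(k-2) := by positivity
    rw [neg_le]
    rw [neg_sub]
    calc (alpha (r-k+1) : ℝ) * (n.choose (k-1) : ℝ) - (beta n r k : ℝ)
        ≤ (alpha (r-k+1) : ℝ) * (m₀ : ℝ) * (n:ℝ)^(k-2) := by linarith
    _ ≤ ((alpha (r-k+1) : ℝ) * m₀ + ((sBound r)^2 : ℕ) + 1) * (n:ℝ)^(k-2) := by
        rw [hexp]; linarith
  · have hexp : ((alpha (r-k+1) : ℝ) * m₀ + ((sBound r)^2 : ℕ) + 1) * (n:ℝ)^(k-2) =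
        (alpha (r-k+1) : ℝ) * (m₀:ℝ) * (n:ℝ)^(k-2) + (((sBound r)^2 : ℕ):ℝ) * (n:ℝ)^(k-2)
          + (n:ℝ)^(k-2) := by ring
    have h2 : (0:ℝ) ≤ (alpha (r-k+1) : ℝ) * (m₀:ℝ) * (n:ℝ)^(k-2) := by positivity
    calc (beta n r k : ℝ) - (alpha (r-k+1) : ℝ) * (n.choose (k-1) : ℝ)
        ≤ (((sBound r)^2 : ℕ):ℝ) * (n:ℝ)^(k-2) := by linarith
    _ ≤ ((alpha (r-k+1) : ℝ) * m₀ + ((sBound r)^2 : ℕ) + 1) * (n:ℝ)^(k-2) := by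
        rw [hexp]; linarith
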